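/- Let k ∈ ℝ with k ∉ {1, 2}, let a > 0, and set Ω(k) = √a · ((k−2)/√(k−1)) · i ∈ ℂ, where √(k−1) is the principal complex square root. Then for all natural numbers n, m: k · (D_{n,k}(Ω;a)·D_{m,k}(Ω;a) + D_{n,k}(−Ω;a)·D_{m,k}(−Ω;a)) / (2·(k−1)·(2−k)) = ((2−k)·k/(k−1)) · ((1 + (−1)^{n+m})/2) · (i·√(a/(k−1)))^{n+m}, where √(a/(k−1)) is the principal complex square root. -/

import Mathlib

/-- The Dickson polynomial of the `(k+1)`-th kind with real parameters `k, a`,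
evaluated at a complex argument, defined by the three-term recurrence. -/
noncomputable def dicksonC (k a : ℝ) : ℕ → ℂ → ℂ
  | 0, _ => 2 - k
  | 1, x => x
  | n + 2, x => x * dicksonC k a (n + 1) x - a * dicksonC k a n x

lemma dickson_eval (k a : ℝ) (x : ℂ) (hx : x ^ 2 * ((k : ℂ) - 1) = -(a : ℂ)) :
    ∀ n, dicksonC k a n (((k : ℂ) - 2) * x) = (2 - (k : ℂ)) * (-x) ^ n
  | 0 => by simp [dicksonC]
  | 1 => by simp [dicksonC]; ring
  | (n + 2) => by
      rw [dicksonC, dickson_eval k a x hx (n + 1), dickson_eval k a x hx n]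
      have h : (-x) ^ (n + 2) = (-x) ^ n * x ^ 2 := by ring
      have h1 : (-x) ^ (n + 1) = -((-x) ^ n * x) := by ring
      rw [h, h1]
      linear_combination (-(2 - (k : ℂ)) * (-x) ^ n) * hx

theorem dickson_discrete_part (k a : ℝ) (hk1 : k ≠ 1) (hk2 : k ≠ 2) (ha : 0 < a)
    (n m : ℕ) :
    (k : ℂ) *
        (dicksonC k a n ((Real.sqrt a : ℂ) * (((k : ℂ) - 2) / ((k : ℂ) - 1) ^ ((1 : ℂ) / 2)) *
              Complex.I) *
          dicksonC k a m ((Real.sqrt a : ℂ) * (((k : ℂ) - 2) / ((k : ℂ) - 1) ^ ((1 : ℂ) / 2)) *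
              Complex.I) +
        dicksonC k a n (-((Real.sqrt a : ℂ) * (((k : ℂ) - 2) / ((k : ℂ) - 1) ^ ((1 : ℂ) / 2)) *
              Complex.I)) *
          dicksonC k a m (-((Real.sqrt a : ℂ) * (((k : ℂ) - 2) / ((k : ℂ) - 1) ^ ((1 : ℂ) / 2)) *
              Complex.I))) /
        (2 * ((k : ℂ) - 1) * (2 - (k : ℂ))) =
      ((2 - (k : ℂ)) * k / ((k : ℂ) - 1)) * ((1 + (-1 : ℂ) ^ (n + m)) / 2) *
        (Complex.I * ((a : ℂ) / ((k : ℂ) - 1)) ^ ((1 : ℂ) / 2)) ^ (n + m) := by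
  have hk1' : (k : ℂ) - 1 ≠ 0 := by
    intro h
    apply hk1
    have := sub_eq_zero.mp h
    exact_mod_cast this
  have hk2' : (2 : ℂ) - (k : ℂ) ≠ 0 := by
    intro h
    apply hk2
    have := (sub_eq_zero.mp h).symm
    exact_mod_cast this
  have ha0 : (a : ℂ) ≠ 0 := by exact_mod_cast ha.ne'
  -- the square of the principal square root of k - 1
  have hs : (((k : ℂ) - 1) ^ ((1 : ℂ) / 2)) ^ 2 = (k : ℂ) - 1 := by
    rw [sq, ← Complex.cpow_add _ _ hk1']
    norm_num
  have hs0 : ((k : ℂ) - 1) ^ ((1 : ℂ) / 2) ≠ 0 := by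
    intro h
    apply hk1'
    rw [← hs, h]
    ring
  set c : ℂ := (Real.sqrt a : ℂ) / ((k : ℂ) - 1) ^ ((1 : ℂ) / 2) * Complex.I with hc
  have hra : ((Real.sqrt a : ℂ)) ^ 2 = (a : ℂ) := by
    rw [← Complex.ofReal_pow, Real.sq_sqrt ha.le]
  have hc2 : c ^ 2 * ((k : ℂ) - 1) = -(a : ℂ) := by
    rw [hc]
    field_simp
    rw [hra, Complex.I_sq, hs]
    ring
  have hc2' : (-c) ^ 2 * ((k : ℂ) - 1) = -(a : ℂ) := by rw [neg_pow]; simpa using hc2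
  have harg : (Real.sqrt a : ℂ) * (((k : ℂ) - 2) / ((k : ℂ) - 1) ^ ((1 : ℂ) / 2)) * Complex.I
      = ((k : ℂ) - 2) * c := by rw [hc]; ring
  have harg' : -(((k : ℂ) - 2) * c) = ((k : ℂ) - 2) * (-c) := by ring
  rw [harg, harg', dickson_eval k a c hc2 n, dickson_eval k a c hc2 m,
    dickson_eval k a (-c) hc2' n, dickson_eval k a (-c) hc2' m]
  simp only [neg_neg]
  -- the square of I * sqrt(a/(k-1))
  have hb : (Complex.I * ((a : ℂ) / ((k : ℂ) - 1)) ^ ((1 : ℂ) / 2)) ^ 2 = c ^ 2 := by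
    have hak : (a : ℂ) / ((k : ℂ) - 1) ≠ 0 := div_ne_zero ha0 hk1'
    have : (((a : ℂ) / ((k : ℂ) - 1)) ^ ((1 : ℂ) / 2)) ^ 2 = (a : ℂ) / ((k : ℂ) - 1) := by
      rw [sq, ← Complex.cpow_add _ _ hak]
      norm_num
    rw [mul_pow, Complex.I_sq, this, hc]
    rw [mul_pow, div_pow, hra, Complex.I_sq, hs]
    ring
  rcases Nat.even_or_odd (n + m) with ⟨t, ht⟩ | ⟨t, ht⟩
  · have hcpow : c ^ (n + m) = (Complex.I * ((a : ℂ) / ((k : ℂ) - 1)) ^ ((1 : ℂ) / 2)) ^ (n + m) := by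
      rw [ht, show t + t = 2 * t by ring, pow_mul, pow_mul, hb]
    have hneg : ((-1 : ℂ)) ^ (n + m) = 1 := by
      rw [ht, show t + t = 2 * t by ring, pow_mul]; norm_num
    have hsplit : (-c) ^ n * (-c) ^ m = c ^ (n + m) := by
      rw [← pow_add, ht, show t + t = 2 * t by ring, pow_mul, pow_mul, neg_sq]
    have hL : (k : ℂ) * ((2 - (k:ℂ)) * (-c) ^ n * ((2 - (k:ℂ)) * (-c) ^ m) +
        (2 - (k:ℂ)) * c ^ n * ((2 - (k:ℂ)) * c ^ m)) =
        (k:ℂ) * (2 - (k:ℂ)) ^ 2 * ((-c) ^ n * (-c) ^ m + c ^ (n + m)) := by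
      rw [pow_add]; ring
    rw [hL, hsplit, ← hcpow, hneg]
    field_simp
  · have hneg : ((-1 : ℂ)) ^ (n + m) = -1 := by
      rw [ht, pow_succ, pow_mul]; norm_num
    have hsplit : (-c) ^ n * (-c) ^ m = -(c ^ (n + m)) := by
      rw [← pow_add, ht, neg_pow, pow_succ, pow_mul]; norm_num
    have hL : (k : ℂ) * ((2 - (k:ℂ)) * (-c) ^ n * ((2 - (k:ℂ)) * (-c) ^ m) +
        (2 - (k:ℂ)) * c ^ n * ((2 - (k:ℂ)) * c ^ m)) =
        (k:ℂ) * (2 - (k:ℂ)) ^ 2 * ((-c) ^ n * (-c) ^ m + c ^ (n + m)) := by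
      rw [pow_add]; ring
    rw [hL, hsplit, hneg]
    field_simp
    ring
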